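/- Static regret for S (Optimistic Dual Averaging): In the setting of the strategy S — E a real normed vector space, φ: [0,∞) → [0,+∞] convex with φ(0) = 0, ψ proper and φ-convex, a ∈ E, a^ψ ∈ ∂ψ(a), x̂_t* ∈ E*, x̃_t^ψ = a^ψ − η_t Σ_{i=1}^{t−1} θ_i x_i*, points x̃_t, x_t with x̃_t^ψ ∈ ∂ψ(x̃_t) and x̃_t^ψ − η_t θ_t x̂_t* ∈ ∂ψ(x_t), losses f_t with x_t* ∈ ∂f_t(x_t), and for each t some X_{t+1} with (1/η_{t+1})(x̃_{t+1}^ψ − a^ψ) ∈ ∂ψ̃_t(X_{t+1}) where ψ̃_t(x) = (1/η_t)(ψ(x) − ⟨a^ψ, x⟩) — the following hold for every z ∈ dom ψ with f_t(z) < +∞ for all t: (1) if θ_t ≡ 1 and η_1 ≥ η_2 ≥ … ≥ η_{T+1} > 0, then Σ_{t=1}^T (f_t(x_t) − f_t(z)) ≤ (1/η_{T+1}) B_ψ(z, a^ψ) + Σ_{t=1}^T (1/η_t) φ*(η_t‖x_t* − x̂_t*‖) − Σ_{t=1}^T (1/η_t) B_ψ(x_t, x̃_t^ψ); (2) if η_t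 ≡ 1 and 0 < θ_1 ≤ θ_2 ≤ … ≤ θ_T, then Σ_{t=1}^T (f_t(x_t) − f_t(z)) ≤ (1/θ_1) B_ψ(z, a^ψ) + Σ_{t=1}^T (1/θ_t) φ*(θ_t‖x_t* − x̂_t*‖) − Σ_{t=1}^T (1/θ_t) B_ψ(x_t, x̃_t^ψ). -/

import Mathlib

open Finset

/-- Fenchel conjugate of an extended-real-valued function on a normed space. -/
noncomputable def fconj {E : Type*} [NormedAddCommGroup E] [NormedSpace ℝ E]
    (g : E → EReal) (p : E →L[ℝ] ℝ) : EReal :=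
  ⨆ x : E, ((p x : ℝ) : EReal) - g x

/-- Generalized Bregman divergence `B_g(x, y*) = g(x) + g*(y*) − ⟨y*, x⟩`. -/
noncomputable def breg {E : Type*} [NormedAddCommGroup E] [NormedSpace ℝ E]
    (g : E → EReal) (x : E) (p : E →L[ℝ] ℝ) : EReal :=
  g x + fconj g p - ((p x : ℝ) : EReal)

/-- Subdifferential: `∂g(x) = {x* : B_g(x, x*) = 0}`. -/
def subdiff {E : Type*} [NormedAddCommGroup E] [NormedSpace ℝ E]
    (g : E → EReal) (x : E) : Set (E →L[ℝ] ℝ) :=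
  {p | breg g x p = 0}

/-- Conjugate of `Φ : [0,∞) → [0,+∞]` : `Φ*(s) = sup_{r ≥ 0} (s·r − Φ(r))`. -/
noncomputable def phiConj (Φ : ℝ → EReal) (s : ℝ) : EReal :=
  ⨆ r : {r : ℝ // 0 ≤ r}, ((s * r.1 : ℝ) : EReal) - Φ r.1

section Aux

theorem phiConj_nonneg (Φ : ℝ → EReal) (hΦ0 : Φ 0 = 0) (s : ℝ) : 0 ≤ phiConj Φ s := by
  have h := le_iSup (fun r : {r : ℝ // 0 ≤ r} => ((s * r.1 : ℝ) : EReal) - Φ r.1) ⟨0, le_refl 0⟩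
  exact le_trans (by simp [hΦ0]) h

theorem fy (Φ : ℝ → EReal) (hΦ0 : Φ 0 = 0) (hΦnn : ∀ s : ℝ, 0 ≤ s → 0 ≤ Φ s)
    {s u : ℝ} (hu : 0 ≤ u) (hfin : phiConj Φ s ≠ ⊤) (hΦfin : Φ u ≠ ⊤) :
    s * u ≤ (phiConj Φ s).toReal + (Φ u).toReal := by
  have h : ((s * u : ℝ) : EReal) - Φ u ≤ phiConj Φ s :=
    le_iSup (fun r : {r : ℝ // 0 ≤ r} => ((s * r.1 : ℝ) : EReal) - Φ r.1) ⟨u, hu⟩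
  have hΦb : Φ u ≠ ⊥ := fun hb => by simpa [hb] using (hΦnn u hu)
  have hpb : phiConj Φ s ≠ ⊥ := fun hb => by simpa [hb] using phiConj_nonneg Φ hΦ0 s
  rw [← EReal.coe_toReal hΦfin hΦb, ← EReal.coe_toReal hfin hpb, ← EReal.coe_sub] at h
  have := EReal.coe_le_coe_iff.mp h
  linarith

theorem ecoe_sum (s : Finset ℕ) (f : ℕ → ℝ) :
    ((∑ j ∈ s, f j : ℝ) : EReal) = ∑ j ∈ s, ((f j : ℝ) : EReal) := by
  induction s using Finset.cons_induction with
  | empty => simp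
  | cons i s hi ih => rw [Finset.sum_cons, Finset.sum_cons, ← ih, EReal.coe_add]

theorem esum_top (s : Finset ℕ) (f : ℕ → EReal) (i : ℕ) (hi : i ∈ s)
    (h0 : ∀ j ∈ s, 0 ≤ f j) (ht : f i = ⊤) : ∑ j ∈ s, f j = ⊤ := by
  have := Finset.single_le_sum h0 hi
  rw [ht] at this; exact top_le_iff.mp this

theorem telescope (T : ℕ) (hT : 1 ≤ T) (w r c Q R : ℕ → ℝ)
    (hw : ∀ t, 1 ≤ t → t ≤ T → 0 < w t)
    (hr : ∀ t, 1 ≤ t → t ≤ T → r t ≤ w t * (c t + Q t - R t))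
    (hR : ∀ t, 1 ≤ t → t ≤ T → Q (t - 1) ≤ R t)
    (hQw : ∀ t, 1 ≤ t → t + 1 ≤ T → Q t * w t ≤ Q t * w (t + 1)) :
    ∑ t ∈ Icc 1 T, r t ≤ (∑ t ∈ Icc 1 T, w t * c t) + w T * Q T - w 1 * Q 0 := by
  induction T, hT using Nat.le_induction with
  | base =>
    simp only [Finset.Icc_self, Finset.sum_singleton]
    have h1 := hr 1 le_rfl le_rfl
    have h2 := hR 1 le_rfl le_rfl
    have h3 := hw 1 le_rfl le_rfl
    nlinarith [mul_le_mul_of_nonneg_left h2 h3.le]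
  | succ T hT ih =>
    have hsum : ∀ g : ℕ → ℝ, ∑ t ∈ Icc 1 (T + 1), g t = (∑ t ∈ Icc 1 T, g t) + g (T + 1) :=
      fun g => Finset.sum_Icc_succ_top (by omega) g
    rw [hsum, hsum]
    have ih' := ih (fun t h1 h2 => hw t h1 (by omega)) (fun t h1 h2 => hr t h1 (by omega))
      (fun t h1 h2 => hR t h1 (by omega)) (fun t h1 h2 => hQw t h1 (by omega))
    have h1 := hr (T + 1) (by omega) le_rfl
    have h2 := hR (T + 1) (by omega) le_rfl
    have h3 := hw (T + 1) (by omega) le_rfl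
    have h4 := hQw T (by omega) le_rfl
    have h5 : Q ((T + 1) - 1) = Q T := by norm_num
    rw [h5] at h2
    nlinarith [mul_le_mul_of_nonneg_left h2 h3.le]

theorem subdiff_props {E : Type*} [NormedAddCommGroup E] [NormedSpace ℝ E]
    {g : E → EReal} {y : E} {p : E →L[ℝ] ℝ} (h : p ∈ subdiff g y) :
    g y = ((g y).toReal : EReal) ∧ fconj g p = ((p y - (g y).toReal : ℝ) : EReal) ∧
      ∀ x : E, ((p x - p y + (g y).toReal : ℝ) : EReal) ≤ g x := by
  have h' : g y + fconj g p - ((p y : ℝ) : EReal) = 0 := h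
  have hge : ∀ x : E, ((p x : ℝ) : EReal) - g x ≤ fconj g p :=
    fun x => le_iSup (fun x => ((p x : ℝ) : EReal) - g x) x
  have hyb : g y ≠ ⊥ := by
    intro hb; rw [hb] at h'; simp [EReal.bot_add, EReal.bot_sub] at h'
  have hyt : g y ≠ ⊤ := by
    intro ht; rw [ht] at h'
    rcases eq_or_ne (fconj g p) ⊥ with hc | hc
    · rw [hc] at h'; simp at h'
    · rw [EReal.top_add_of_ne_bot hc] at h'; simp [EReal.top_sub_coe] at h'
  have hcb : fconj g p ≠ ⊥ := by
    intro hb; rw [hb] at h'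
    rw [EReal.add_bot] at h'; simp [EReal.bot_sub] at h'
  have hct : fconj g p ≠ ⊤ := by
    intro ht; rw [ht] at h'
    rw [EReal.add_top_of_ne_bot hyb] at h'; simp [EReal.top_sub_coe] at h'
  set gy := (g y).toReal with hgy
  have h1 : g y = (gy : EReal) := (EReal.coe_toReal hyt hyb).symm
  set c := (fconj g p).toReal
  have h2 : fconj g p = (c : EReal) := (EReal.coe_toReal hct hcb).symm
  rw [h1, h2] at h'
  have h3 : gy + c - p y = 0 := by exact_mod_cast h'
  have hc : c = p y - gy := by linarith
  refine ⟨h1, by rw [h2, hc], fun x => ?_⟩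
  have hx1 := hge x
  rw [h2, hc] at hx1
  rcases eq_or_ne (g x) ⊤ with hx | hx
  · rw [hx]; exact le_top
  have hxb : g x ≠ ⊥ := by
    intro hb; rw [hb, EReal.coe_sub_bot] at hx1
    exact (EReal.coe_ne_top _) (top_le_iff.mp hx1)
  have h4 : g x = ((g x).toReal : EReal) := (EReal.coe_toReal hx hxb).symm
  rw [h4] at hx1 ⊢
  rw [← EReal.coe_sub] at hx1
  have hx2 : (p x : ℝ) - (g x).toReal ≤ p y - gy := by exact_mod_cast hx1
  exact_mod_cast (by linarith : p x - p y + gy ≤ (g x).toReal)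

theorem subdiff_fin {E : Type*} [NormedAddCommGroup E] [NormedSpace ℝ E]
    {g : E → EReal} {y : E} {p : E →L[ℝ] ℝ} (h : p ∈ subdiff g y) : g y ≠ ⊤ := by
  rw [(subdiff_props h).1]; exact EReal.coe_ne_top _

theorem breg_real {E : Type*} [NormedAddCommGroup E] [NormedSpace ℝ E]
    {g : E → EReal} {y : E} {p : E →L[ℝ] ℝ} (hp : p ∈ subdiff g y) {x : E}
    (hxt : g x ≠ ⊤) (hxb : g x ≠ ⊥) :
    breg g x p = (((g x).toReal + (p y - (g y).toReal) - p x : ℝ) : EReal) := by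
  obtain ⟨h1, h2, h3⟩ := subdiff_props hp
  rw [breg, h2]
  conv_lhs => rw [← EReal.coe_toReal hxt hxb]
  rw [← EReal.coe_add, ← EReal.coe_sub]

theorem psi_subgrad {E : Type*} [NormedAddCommGroup E] [NormedSpace ℝ E]
    (Φ : ℝ → EReal) (ψ : E → EReal) (hbot : ∀ x, ψ x ≠ ⊥)
    (hΦnn : ∀ s : ℝ, 0 ≤ s → 0 ≤ Φ s)
    (hψ : ∀ (x y : E) (p : E →L[ℝ] ℝ), p ∈ subdiff ψ y → Φ ‖x - y‖ ≤ breg ψ x p)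
    {y : E} {p : E →L[ℝ] ℝ} (hp : p ∈ subdiff ψ y) {x : E} (hx : ψ x ≠ ⊤) :
    Φ ‖x - y‖ ≠ ⊤ ∧
      (ψ y).toReal + (p x - p y) + (Φ ‖x - y‖).toReal ≤ (ψ x).toReal := by
  have hbx := breg_real hp hx (hbot x)
  have h := hψ x y p hp
  rw [hbx] at h
  have hnn : (0 : EReal) ≤ Φ ‖x - y‖ := hΦnn _ (norm_nonneg _)
  have hft : Φ ‖x - y‖ ≠ ⊤ := by
    intro ht; rw [ht] at h; exact (EReal.coe_ne_top _) (top_le_iff.mp h)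
  have hfb : Φ ‖x - y‖ ≠ ⊥ := fun hb => by simp [hb] at hnn
  rw [← EReal.coe_toReal hft hfb] at h
  have h2 := EReal.coe_le_coe_iff.mp h
  exact ⟨hft, by linarith⟩

theorem psi_subgrad0 {E : Type*} [NormedAddCommGroup E] [NormedSpace ℝ E]
    (Φ : ℝ → EReal) (ψ : E → EReal) (hbot : ∀ x, ψ x ≠ ⊥)
    (hΦnn : ∀ s : ℝ, 0 ≤ s → 0 ≤ Φ s)
    (hψ : ∀ (x y : E) (p : E →L[ℝ] ℝ), p ∈ subdiff ψ y → Φ ‖x - y‖ ≤ breg ψ x p)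
    {y : E} {p : E →L[ℝ] ℝ} (hp : p ∈ subdiff ψ y) {x : E} (hx : ψ x ≠ ⊤) :
    (ψ y).toReal + (p x - p y) ≤ (ψ x).toReal := by
  obtain ⟨hft, h⟩ := psi_subgrad Φ ψ hbot hΦnn hψ hp hx
  have h0 : 0 ≤ (Φ ‖x - y‖).toReal := by
    have := hΦnn ‖x - y‖ (norm_nonneg _)
    rcases eq_or_ne (Φ ‖x - y‖) ⊤ with ht | ht
    · simp [ht]
    · have hb : Φ ‖x - y‖ ≠ ⊥ := fun hb => by simp [hb] at this
      rw [← EReal.coe_toReal ht hb] at this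
      exact_mod_cast this
  linarith

theorem hX_real {E : Type*} [NormedAddCommGroup E] [NormedSpace ℝ E]
    (ψ : E → EReal) (hbot : ∀ x, ψ x ≠ ⊥) (apsi : E →L[ℝ] ℝ) (q : E →L[ℝ] ℝ)
    {c : ℝ} (hc : 0 < c) {X : E}
    (h : q ∈ subdiff (fun x => ((c : ℝ) : EReal) * (ψ x - ((apsi x : ℝ) : EReal))) X) :
    ψ X ≠ ⊤ ∧ ∀ x : E, ψ x ≠ ⊤ →
      c * ((ψ X).toReal - apsi X) + (q x - q X) ≤ c * ((ψ x).toReal - apsi x) := by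
  obtain ⟨h1, h2, h3⟩ := subdiff_props h
  have hgx : ∀ x : E, ψ x ≠ ⊤ →
      ((c : ℝ) : EReal) * (ψ x - ((apsi x : ℝ) : EReal)) =
        ((c * ((ψ x).toReal - apsi x) : ℝ) : EReal) := by
    intro x hx
    conv_lhs => rw [← EReal.coe_toReal hx (hbot x)]
    rw [← EReal.coe_sub, ← EReal.coe_mul]
  have hXt : ψ X ≠ ⊤ := by
    intro ht
    have htop : ((c : ℝ) : EReal) * (ψ X - ((apsi X : ℝ) : EReal)) = ⊤ := by
      rw [ht, EReal.top_sub_coe]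
      exact EReal.coe_mul_top_of_pos hc
    rw [htop] at h1
    simp at h1
  refine ⟨hXt, fun x hx => ?_⟩
  have h3x := h3 x
  rw [hgx x hx] at h3x
  have hXv : ((c : ℝ) : EReal) * (ψ X - ((apsi X : ℝ) : EReal)) =
      ((c * ((ψ X).toReal - apsi X) : ℝ) : EReal) := hgx X hXt
  have hXtr : ((fun x => ((c : ℝ) : EReal) * (ψ x - ((apsi x : ℝ) : EReal))) X).toReal
      = c * ((ψ X).toReal - apsi X) := by
    simp only; rw [hXv]; exact EReal.toReal_coe _
  rw [hXtr] at h3x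
  have := EReal.coe_le_coe_iff.mp h3x
  linarith

theorem f_real {E : Type*} [NormedAddCommGroup E] [NormedSpace ℝ E]
    {g : E → EReal} {y : E} {p : E →L[ℝ] ℝ} (hp : p ∈ subdiff g y) {z : E} (hz : g z ≠ ⊤) :
    g y ≠ ⊤ ∧ g y ≠ ⊥ ∧ g z ≠ ⊥ ∧ (g y).toReal - (g z).toReal ≤ p y - p z := by
  obtain ⟨h1, h2, h3⟩ := subdiff_props hp
  have hyt : g y ≠ ⊤ := by rw [h1]; exact EReal.coe_ne_top _
  have hyb : g y ≠ ⊥ := by rw [h1]; exact EReal.coe_ne_bot _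
  have hzb : g z ≠ ⊥ := by
    intro hb; have h3z := h3 z; rw [hb] at h3z
    exact EReal.coe_ne_bot _ (le_bot_iff.mp h3z)
  have h3z := h3 z
  rw [← EReal.coe_toReal hz hzb] at h3z
  have h4 := EReal.coe_le_coe_iff.mp h3z
  exact ⟨hyt, hyb, hzb, by linarith⟩

end Aux
set_option maxHeartbeats 2000000 in
/-- **Static regret for the strategy S (Optimistic Dual Averaging).** -/
theorem static_regret_S
    {E : Type*} [NormedAddCommGroup E] [NormedSpace ℝ E]
    (Φ : ℝ → EReal)
    (hΦconv : ∀ a b s t : ℝ, 0 ≤ a → 0 ≤ b → a + b = 1 → 0 ≤ s → 0 ≤ t →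
      Φ (a * s + b * t) ≤ (a : EReal) * Φ s + (b : EReal) * Φ t)
    (hΦ0 : Φ 0 = 0) (hΦnn : ∀ s : ℝ, 0 ≤ s → 0 ≤ Φ s)
    (ψ : E → EReal) (hbot : ∀ x, ψ x ≠ ⊥) (hproper : ∃ x, ψ x ≠ ⊤)
    (hψ : ∀ (x y : E) (p : E →L[ℝ] ℝ), p ∈ subdiff ψ y → Φ ‖x - y‖ ≤ breg ψ x p)
    (T : ℕ) (hT : 1 ≤ T)
    (a : E) (apsi : E →L[ℝ] ℝ) (ha : apsi ∈ subdiff ψ a)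
    (η θ : ℕ → ℝ)
    (hη : ∀ t ∈ Icc 1 (T + 1), 0 < η t) (hθ : ∀ t ∈ Icc 1 T, 0 < θ t)
    (xhat xstar : ℕ → E →L[ℝ] ℝ)
    (xtilpsi : ℕ → E →L[ℝ] ℝ)
    (hxtilpsi : ∀ t ∈ Icc 1 (T + 1),
      xtilpsi t = apsi - η t • ∑ i ∈ Ico 1 t, θ i • xstar i)
    (xtil xt : ℕ → E)
    (hxtil : ∀ t ∈ Icc 1 T, xtilpsi t ∈ subdiff ψ (xtil t))
    (hxt : ∀ t ∈ Icc 1 T, xtilpsi t - (η t * θ t) • xhat t ∈ subdiff ψ (xt t))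
    (f : ℕ → E → EReal)
    (hf : ∀ t ∈ Icc 1 T, xstar t ∈ subdiff (f t) (xt t))
    (X : ℕ → E)
    (hX : ∀ t ∈ Icc 1 T,
      (1 / η (t + 1)) • (xtilpsi (t + 1) - apsi) ∈
        subdiff (fun x => ((1 / η t : ℝ) : EReal) * (ψ x - ((apsi x : ℝ) : EReal)))
          (X (t + 1)))
    (z : E) (hzdom : ψ z < ⊤) (hz : ∀ t ∈ Icc 1 T, f t z < ⊤) :
    ((∀ t ∈ Icc 1 T, θ t = 1) → (∀ t ∈ Icc 1 T, η (t + 1) ≤ η t) →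
      ∑ t ∈ Icc 1 T, (f t (xt t) - f t z) ≤
        ((1 / η (T + 1) : ℝ) : EReal) * breg ψ z apsi
        + (∑ t ∈ Icc 1 T, ((1 / η t : ℝ) : EReal) *
            phiConj Φ (η t * ‖xstar t - xhat t‖))
        - ∑ t ∈ Icc 1 T, ((1 / η t : ℝ) : EReal) * breg ψ (xt t) (xtilpsi t))
    ∧
    ((∀ t ∈ Icc 1 (T + 1), η t = 1) → (∀ s t : ℕ, 1 ≤ s → s ≤ t → t ≤ T → θ s ≤ θ t) →
      ∑ t ∈ Icc 1 T, (f t (xt t) - f t z) ≤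
        ((1 / θ 1 : ℝ) : EReal) * breg ψ z apsi
        + (∑ t ∈ Icc 1 T, ((1 / θ t : ℝ) : EReal) *
            phiConj Φ (θ t * ‖xstar t - xhat t‖))
        - ∑ t ∈ Icc 1 T, ((1 / θ t : ℝ) : EReal) * breg ψ (xt t) (xtilpsi t)) := by
  classical
  have hη' : ∀ t, 1 ≤ t → t ≤ T + 1 → 0 < η t := fun t h1 h2 => hη t (mem_Icc.mpr ⟨h1, h2⟩)
  have hθ' : ∀ t, 1 ≤ t → t ≤ T → 0 < θ t := fun t h1 h2 => hθ t (mem_Icc.mpr ⟨h1, h2⟩)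
  have hfz : ψ z ≠ ⊤ := hzdom.ne
  have hfa : ψ a ≠ ⊤ := subdiff_fin ha
  have hfxtil : ∀ t, 1 ≤ t → t ≤ T → ψ (xtil t) ≠ ⊤ :=
    fun t h1 h2 => subdiff_fin (hxtil t (mem_Icc.mpr ⟨h1, h2⟩))
  have hfxt : ∀ t, 1 ≤ t → t ≤ T → ψ (xt t) ≠ ⊤ :=
    fun t h1 h2 => subdiff_fin (hxt t (mem_Icc.mpr ⟨h1, h2⟩))
  have hXr : ∀ t, 1 ≤ t → t ≤ T → ψ (X (t + 1)) ≠ ⊤ ∧ ∀ x : E, ψ x ≠ ⊤ →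
      (1 / η t) * ((ψ (X (t + 1))).toReal - apsi (X (t + 1)))
        + (((1 / η (t + 1)) • (xtilpsi (t + 1) - apsi)) x
            - ((1 / η (t + 1)) • (xtilpsi (t + 1) - apsi)) (X (t + 1)))
        ≤ (1 / η t) * ((ψ x).toReal - apsi x) :=
    fun t h1 h2 => hX_real ψ hbot apsi _ (one_div_pos.mpr (hη' t h1 (by omega)))
      (hX t (mem_Icc.mpr ⟨h1, h2⟩))
  have hxtev : ∀ t, 1 ≤ t → t ≤ T + 1 → ∀ x : E,
      xtilpsi t x = apsi x - η t * ∑ i ∈ Ico 1 t, θ i * xstar i x := by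
    intro t h1 h2 x
    rw [hxtilpsi t (mem_Icc.mpr ⟨h1, h2⟩)]
    simp [ContinuousLinearMap.sub_apply, ContinuousLinearMap.smul_apply,
      ContinuousLinearMap.sum_apply, smul_eq_mul, Finset.mul_sum]
  have hXlin : ∀ t, 1 ≤ t → t ≤ T → ∀ x : E, ψ x ≠ ⊤ →
      (1 / η t) * ((ψ (X (t + 1))).toReal - apsi (X (t + 1)))
        + ((∑ i ∈ Ico 1 (t + 1), θ i * xstar i (X (t + 1)))
            - ∑ i ∈ Ico 1 (t + 1), θ i * xstar i x)
        ≤ (1 / η t) * ((ψ x).toReal - apsi x) := by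
    intro t h1 h2 x hx
    have hq : ∀ v : E, ((1 / η (t + 1)) • (xtilpsi (t + 1) - apsi)) v
        = - ∑ i ∈ Ico 1 (t + 1), θ i * xstar i v := by
      intro v
      have hev := hxtev (t + 1) (by omega) (by omega) v
      have hne : η (t + 1) ≠ 0 := (hη' (t + 1) (by omega) (by omega)).ne'
      simp only [ContinuousLinearMap.smul_apply, ContinuousLinearMap.sub_apply, smul_eq_mul]
      rw [hev]
      field_simp
      ring
    have h := (hXr t h1 h2).2 x hx
    rw [hq x, hq (X (t + 1))] at h
    linarith
  have hfr : ∀ t, 1 ≤ t → t ≤ T → f t (xt t) ≠ ⊤ ∧ f t (xt t) ≠ ⊥ ∧ f t z ≠ ⊥ ∧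
      (f t (xt t)).toReal - (f t z).toReal ≤ xstar t (xt t) - xstar t z :=
    fun t h1 h2 => f_real (hf t (mem_Icc.mpr ⟨h1, h2⟩)) (hz t (mem_Icc.mpr ⟨h1, h2⟩)).ne
  have hbregz : breg ψ z apsi
      = (((ψ z).toReal + (apsi a - (ψ a).toReal) - apsi z : ℝ) : EReal) :=
    breg_real ha hfz (hbot z)
  have hbregB : ∀ t, 1 ≤ t → t ≤ T → breg ψ (xt t) (xtilpsi t)
      = (((ψ (xt t)).toReal + ((xtilpsi t) (xtil t) - (ψ (xtil t)).toReal)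
          - (xtilpsi t) (xt t) : ℝ) : EReal) :=
    fun t h1 h2 => breg_real (hxtil t (mem_Icc.mpr ⟨h1, h2⟩)) (hfxt t h1 h2) (hbot _)
  have hDnn : ∀ x : E, ψ x ≠ ⊤ →
      0 ≤ ((ψ x).toReal - apsi x) - ((ψ a).toReal - apsi a) := by
    intro x hx
    have := psi_subgrad0 Φ ψ hbot hΦnn hψ ha hx
    linarith
  have hBnn : ∀ t, 1 ≤ t → t ≤ T →
      0 ≤ (ψ (xt t)).toReal + ((xtilpsi t) (xtil t) - (ψ (xtil t)).toReal)
          - (xtilpsi t) (xt t) := by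
    intro t h1 h2
    have := psi_subgrad0 Φ ψ hbot hΦnn hψ (hxtil t (mem_Icc.mpr ⟨h1, h2⟩)) (hfxt t h1 h2)
    linarith
  have hLHS : ∑ t ∈ Icc 1 T, (f t (xt t) - f t z)
      = ((∑ t ∈ Icc 1 T, ((f t (xt t)).toReal - (f t z).toReal) : ℝ) : EReal) := by
    rw [ecoe_sum]
    refine Finset.sum_congr rfl (fun t ht => ?_)
    obtain ⟨h1, h2, h3, _⟩ := hfr t (mem_Icc.mp ht).1 (mem_Icc.mp ht).2
    conv_lhs => rw [← EReal.coe_toReal h1 h2, ← EReal.coe_toReal (hz t ht).ne h3]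
    rw [← EReal.coe_sub]
  constructor
  · -- Case 1 : θ ≡ 1, η nonincreasing
    intro hθ1 hdec
    have hθ1' : ∀ t, 1 ≤ t → t ≤ T → θ t = 1 := fun t h1 h2 => hθ1 t (mem_Icc.mpr ⟨h1, h2⟩)
    have hdec' : ∀ t, 1 ≤ t → t ≤ T → η (t + 1) ≤ η t :=
      fun t h1 h2 => hdec t (mem_Icc.mpr ⟨h1, h2⟩)
    have hBsum : ∑ t ∈ Icc 1 T, ((1 / η t : ℝ) : EReal) * breg ψ (xt t) (xtilpsi t)
        = ((∑ t ∈ Icc 1 T, (1 / η t) * ((ψ (xt t)).toReal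
            + ((xtilpsi t) (xtil t) - (ψ (xtil t)).toReal) - (xtilpsi t) (xt t)) : ℝ) : EReal) := by
      rw [ecoe_sum]
      refine Finset.sum_congr rfl (fun t ht => ?_)
      rw [hbregB t (mem_Icc.mp ht).1 (mem_Icc.mp ht).2, ← EReal.coe_mul]
    by_cases hfin : ∀ t ∈ Icc 1 T, phiConj Φ (η t * ‖xstar t - xhat t‖) ≠ ⊤
    case neg =>
      push_neg at hfin
      obtain ⟨t₀, ht₀, htop⟩ := hfin
      have hmid : ∑ t ∈ Icc 1 T, ((1 / η t : ℝ) : EReal)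
          * phiConj Φ (η t * ‖xstar t - xhat t‖) = ⊤ := by
        refine esum_top _ _ t₀ ht₀ (fun j hj => ?_) ?_
        · exact mul_nonneg
            (by exact_mod_cast (one_div_pos.mpr (hη' j (mem_Icc.mp hj).1 (le_trans (mem_Icc.mp hj).2 (Nat.le_succ T)))).le)
            (phiConj_nonneg Φ hΦ0 _)
        · rw [htop]
          exact EReal.coe_mul_top_of_pos
            (one_div_pos.mpr (hη' t₀ (mem_Icc.mp ht₀).1 (le_trans (mem_Icc.mp ht₀).2 (Nat.le_succ T))))
      rw [hbregz, hBsum, hmid, ← EReal.coe_mul,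
        EReal.add_top_of_ne_bot (EReal.coe_ne_bot _), EReal.top_sub_coe]
      exact le_top
    case pos =>
      -- finite case
      have hQQe : ∀ t : ℕ, t ≠ 0 →
          (fun t => if t = 0 then
              ((ψ (xtil 1)).toReal - apsi (xtil 1) - ((ψ a).toReal - apsi a)) / η 1
            else ((ψ (X (t + 1))).toReal - apsi (X (t + 1)) - ((ψ a).toReal - apsi a)) / η t
              + ∑ i ∈ Ico 1 (t + 1), θ i * xstar i (X (t + 1))) t
          = ((ψ (X (t + 1))).toReal - apsi (X (t + 1)) - ((ψ a).toReal - apsi a)) / η t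
              + ∑ i ∈ Ico 1 (t + 1), θ i * xstar i (X (t + 1)) := by
        intro t ht; simp only [if_neg ht]
      have hstep : ∀ t, 1 ≤ t → t ≤ T → xstar t (xt t) ≤ (1 : ℝ) *
          ((((phiConj Φ (η t * ‖xstar t - xhat t‖)).toReal
              - ((ψ (xt t)).toReal + ((xtilpsi t) (xtil t) - (ψ (xtil t)).toReal)
                - (xtilpsi t) (xt t))) / η t)
            + (((ψ (X (t + 1))).toReal - apsi (X (t + 1)) - ((ψ a).toReal - apsi a)) / η t
              + ∑ i ∈ Ico 1 (t + 1), θ i * xstar i (X (t + 1)))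
            - (((ψ (xtil t)).toReal - apsi (xtil t) - ((ψ a).toReal - apsi a)) / η t
              + ∑ i ∈ Ico 1 t, θ i * xstar i (xtil t))) := by
        intro t h1 h2
        have hηt : 0 < η t := hη' t h1 (le_trans h2 (Nat.le_succ T))
        have hθt : θ t = 1 := hθ1' t h1 h2
        obtain ⟨hΦfin, hsub⟩ := psi_subgrad Φ ψ hbot hΦnn hψ
          (hxt t (mem_Icc.mpr ⟨h1, h2⟩)) ((hXr t h1 h2).1)
        have hPev : ∀ v : E, (xtilpsi t - (η t * θ t) • xhat t) v
            = xtilpsi t v - η t * θ t * xhat t v := by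
          intro v
          simp [ContinuousLinearMap.sub_apply, ContinuousLinearMap.smul_apply, smul_eq_mul]
        rw [hPev, hPev] at hsub
        have hFY := fy Φ hΦ0 hΦnn (norm_nonneg (X (t + 1) - xt t))
          (hfin t (mem_Icc.mpr ⟨h1, h2⟩)) hΦfin
        have hexp : (xstar t - xhat t) (xt t - X (t + 1))
            = xstar t (xt t) - xstar t (X (t + 1))
              - (xhat t (xt t) - xhat t (X (t + 1))) := by
          simp [ContinuousLinearMap.sub_apply, map_sub]; ring
        have hop : xstar t (xt t) - xstar t (X (t + 1))
              - (xhat t (xt t) - xhat t (X (t + 1)))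
            ≤ ‖xstar t - xhat t‖ * ‖X (t + 1) - xt t‖ := by
          rw [← hexp]
          calc (xstar t - xhat t) (xt t - X (t + 1))
              ≤ |(xstar t - xhat t) (xt t - X (t + 1))| := le_abs_self _
            _ = ‖(xstar t - xhat t) (xt t - X (t + 1))‖ := (Real.norm_eq_abs _).symm
            _ ≤ ‖xstar t - xhat t‖ * ‖xt t - X (t + 1)‖ := ContinuousLinearMap.le_opNorm _ _
            _ = ‖xstar t - xhat t‖ * ‖X (t + 1) - xt t‖ := by rw [norm_sub_rev (xt t) (X (t + 1))]
        have hopη := mul_le_mul_of_nonneg_left hop hηt.le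
        have hev1 := hxtev t h1 (le_trans h2 (Nat.le_succ T)) (xt t)
        have hev2 := hxtev t h1 (le_trans h2 (Nat.le_succ T)) (xtil t)
        have hev3 := hxtev t h1 (le_trans h2 (Nat.le_succ T)) (X (t + 1))
        have hσ3 : ∑ i ∈ Ico 1 (t + 1), θ i * xstar i (X (t + 1))
            = (∑ i ∈ Ico 1 t, θ i * xstar i (X (t + 1))) + θ t * xstar t (X (t + 1)) :=
          Finset.sum_Ico_succ_top h1 _
        rw [hθt] at hsub
        rw [hev1, hev3] at hsub
        rw [one_mul, hσ3, hθt, hev1, hev2]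
        rw [← sub_nonneg, ← mul_le_mul_iff_of_pos_right hηt, zero_mul]
        field_simp
        ring_nf at hsub hFY hopη ⊢
        linarith [hsub, hFY, hopη]
      have hRlink : ∀ t, 1 ≤ t → t ≤ T →
          (fun t => if t = 0 then
              ((ψ (xtil 1)).toReal - apsi (xtil 1) - ((ψ a).toReal - apsi a)) / η 1
            else ((ψ (X (t + 1))).toReal - apsi (X (t + 1)) - ((ψ a).toReal - apsi a)) / η t
              + ∑ i ∈ Ico 1 (t + 1), θ i * xstar i (X (t + 1))) (t - 1)
          ≤ ((ψ (xtil t)).toReal - apsi (xtil t) - ((ψ a).toReal - apsi a)) / η t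
              + ∑ i ∈ Ico 1 t, θ i * xstar i (xtil t) := by
        intro t h1 h2
        rcases eq_or_lt_of_le h1 with heq | hlt
        · rw [← heq]
          simp only [Nat.sub_self, if_pos rfl, Finset.Ico_self, Finset.sum_empty, add_zero]
          exact le_refl _
        · obtain ⟨s, rfl⟩ : ∃ s, t = s + 1 := ⟨t - 1, by omega⟩
          have hs1 : 1 ≤ s := by omega
          have hs2 : s ≤ T := by omega
          simp only [Nat.add_sub_cancel, if_neg (by omega : ¬ s = 0)]
          have hXl := hXlin s hs1 hs2 (xtil (s + 1)) (hfxtil (s + 1) (by omega) h2)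
          have hDn := hDnn (xtil (s + 1)) (hfxtil (s + 1) (by omega) h2)
          have hη1 : 0 < η (s + 1) := hη' (s + 1) (by omega) (by omega)
          have hη2 : 0 < η s := hη' s hs1 (by omega)
          have hinv : 1 / η s ≤ 1 / η (s + 1) :=
            one_div_le_one_div_of_le hη1 (hdec' s hs1 hs2)
          have hmono := mul_le_mul_of_nonneg_left hinv hDn
          rw [div_eq_mul_one_div, div_eq_mul_one_div]
          ring_nf at hXl hmono ⊢
          linarith [hXl, hmono]
      have tel := telescope T hT (fun _ => (1 : ℝ))
        (fun t => xstar t (xt t))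
        (fun t => ((phiConj Φ (η t * ‖xstar t - xhat t‖)).toReal
            - ((ψ (xt t)).toReal + ((xtilpsi t) (xtil t) - (ψ (xtil t)).toReal)
              - (xtilpsi t) (xt t))) / η t)
        (fun t => if t = 0 then
            ((ψ (xtil 1)).toReal - apsi (xtil 1) - ((ψ a).toReal - apsi a)) / η 1
          else ((ψ (X (t + 1))).toReal - apsi (X (t + 1)) - ((ψ a).toReal - apsi a)) / η t
            + ∑ i ∈ Ico 1 (t + 1), θ i * xstar i (X (t + 1)))
        (fun t => ((ψ (xtil t)).toReal - apsi (xtil t) - ((ψ a).toReal - apsi a)) / η t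
            + ∑ i ∈ Ico 1 t, θ i * xstar i (xtil t))
        (fun t _ _ => one_pos)
        (fun t h1 h2 => by
          have := hstep t h1 h2
          simpa only [if_neg (by omega : ¬ t = 0)] using this)
        hRlink
        (fun t _ _ => le_rfl)
      simp only [one_mul, if_neg (by omega : ¬ T = 0), eq_self_iff_true, if_true] at tel
      -- endgame
      have hQT : ((ψ (X (T + 1))).toReal - apsi (X (T + 1)) - ((ψ a).toReal - apsi a)) / η T
            + ∑ i ∈ Ico 1 (T + 1), θ i * xstar i (X (T + 1))
          ≤ ((ψ z).toReal - apsi z - ((ψ a).toReal - apsi a)) / η T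
            + ∑ i ∈ Ico 1 (T + 1), θ i * xstar i z := by
        have hXl := hXlin T hT le_rfl z hfz
        rw [div_eq_mul_one_div, div_eq_mul_one_div]
        ring_nf at hXl ⊢
        linarith [hXl]
      have hQ0 : 0 ≤ ((ψ (xtil 1)).toReal - apsi (xtil 1) - ((ψ a).toReal - apsi a)) / η 1 :=
        div_nonneg (hDnn (xtil 1) (hfxtil 1 le_rfl hT)) (hη' 1 le_rfl (by omega)).le
      have hσz : ∑ i ∈ Ico 1 (T + 1), θ i * xstar i z = ∑ t ∈ Icc 1 T, xstar t z := by
        rw [Finset.Ico_add_one_right_eq_Icc]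
        exact Finset.sum_congr rfl (fun i hi => by rw [hθ1 i hi, one_mul])
      have hDzm : ((ψ z).toReal - apsi z - ((ψ a).toReal - apsi a)) / η T
          ≤ ((ψ z).toReal - apsi z - ((ψ a).toReal - apsi a)) / η (T + 1) := by
        have hinv : 1 / η T ≤ 1 / η (T + 1) :=
          one_div_le_one_div_of_le (hη' (T + 1) (by omega) le_rfl) (hdec' T hT le_rfl)
        have h5 := mul_le_mul_of_nonneg_left hinv (hDnn z hfz)
        rw [div_eq_mul_one_div, div_eq_mul_one_div]
        ring_nf at h5 ⊢
        linarith [h5]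
      have hsum1 : ∑ t ∈ Icc 1 T, (xstar t (xt t) - xstar t z)
          = (∑ t ∈ Icc 1 T, xstar t (xt t)) - ∑ t ∈ Icc 1 T, xstar t z :=
        Finset.sum_sub_distrib _ _
      have hcsplit : ∑ t ∈ Icc 1 T, ((phiConj Φ (η t * ‖xstar t - xhat t‖)).toReal
            - ((ψ (xt t)).toReal + ((xtilpsi t) (xtil t) - (ψ (xtil t)).toReal)
              - (xtilpsi t) (xt t))) / η t
          = (∑ t ∈ Icc 1 T, (1 / η t) * (phiConj Φ (η t * ‖xstar t - xhat t‖)).toReal)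
            - ∑ t ∈ Icc 1 T, (1 / η t) * ((ψ (xt t)).toReal
              + ((xtilpsi t) (xtil t) - (ψ (xtil t)).toReal) - (xtilpsi t) (xt t)) := by
        rw [← Finset.sum_sub_distrib]
        exact Finset.sum_congr rfl (fun t ht => by ring)
      have hreal : ∑ t ∈ Icc 1 T, ((f t (xt t)).toReal - (f t z).toReal)
          ≤ (1 / η (T + 1)) * ((ψ z).toReal + (apsi a - (ψ a).toReal) - apsi z)
            + (∑ t ∈ Icc 1 T, (1 / η t) * (phiConj Φ (η t * ‖xstar t - xhat t‖)).toReal)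
            - ∑ t ∈ Icc 1 T, (1 / η t) * ((ψ (xt t)).toReal
              + ((xtilpsi t) (xtil t) - (ψ (xtil t)).toReal) - (xtilpsi t) (xt t)) := by
        have s1 : ∑ t ∈ Icc 1 T, ((f t (xt t)).toReal - (f t z).toReal)
            ≤ ∑ t ∈ Icc 1 T, (xstar t (xt t) - xstar t z) :=
          Finset.sum_le_sum (fun t ht => (hfr t (mem_Icc.mp ht).1 (mem_Icc.mp ht).2).2.2.2)
        have hDzid : (1 / η (T + 1)) * ((ψ z).toReal + (apsi a - (ψ a).toReal) - apsi z)
            = ((ψ z).toReal - apsi z - ((ψ a).toReal - apsi a)) / η (T + 1) := by ring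
        rw [hDzid]
        rw [hcsplit] at tel
        rw [hσz] at hQT
        linarith [tel, hQT, hQ0, hDzm, s1, hsum1]
      rw [hLHS, hbregz, hBsum, ← EReal.coe_mul]
      have hmid2 : ∑ t ∈ Icc 1 T, ((1 / η t : ℝ) : EReal)
            * phiConj Φ (η t * ‖xstar t - xhat t‖)
          = ((∑ t ∈ Icc 1 T, (1 / η t)
              * (phiConj Φ (η t * ‖xstar t - xhat t‖)).toReal : ℝ) : EReal) := by
        rw [ecoe_sum]
        refine Finset.sum_congr rfl (fun t ht => ?_)
        have hb : phiConj Φ (η t * ‖xstar t - xhat t‖) ≠ ⊥ :=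
          fun hb => by simpa [hb] using phiConj_nonneg Φ hΦ0 (η t * ‖xstar t - xhat t‖)
        conv_lhs => rw [← EReal.coe_toReal (hfin t ht) hb]
        rw [← EReal.coe_mul]
      rw [hmid2, ← EReal.coe_add, ← EReal.coe_sub]
      exact EReal.coe_le_coe_iff.mpr hreal
  · -- Case 2 : η ≡ 1, θ nondecreasing
    intro hη1 hinc
    have hη1' : ∀ t, 1 ≤ t → t ≤ T + 1 → η t = 1 :=
      fun t h1 h2 => hη1 t (mem_Icc.mpr ⟨h1, h2⟩)
    have hθpos : ∀ t, 1 ≤ t → t ≤ T → 0 < θ t := hθ'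
    have hXlin1 : ∀ t, 1 ≤ t → t ≤ T → ∀ x : E, ψ x ≠ ⊤ →
        ((ψ (X (t + 1))).toReal - apsi (X (t + 1)))
          + ((∑ i ∈ Ico 1 (t + 1), θ i * xstar i (X (t + 1)))
              - ∑ i ∈ Ico 1 (t + 1), θ i * xstar i x)
          ≤ ((ψ x).toReal - apsi x) := by
      intro t h1 h2 x hx
      have h := hXlin t h1 h2 x hx
      rw [hη1' t h1 (by omega)] at h
      norm_num at h
      linarith
    have hBsum2 : ∑ t ∈ Icc 1 T, ((1 / θ t : ℝ) : EReal) * breg ψ (xt t) (xtilpsi t)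
        = ((∑ t ∈ Icc 1 T, (1 / θ t) * ((ψ (xt t)).toReal
            + ((xtilpsi t) (xtil t) - (ψ (xtil t)).toReal) - (xtilpsi t) (xt t)) : ℝ) : EReal) := by
      rw [ecoe_sum]
      refine Finset.sum_congr rfl (fun t ht => ?_)
      rw [hbregB t (mem_Icc.mp ht).1 (mem_Icc.mp ht).2, ← EReal.coe_mul]
    by_cases hfin : ∀ t ∈ Icc 1 T, phiConj Φ (θ t * ‖xstar t - xhat t‖) ≠ ⊤
    case neg =>
      push_neg at hfin
      obtain ⟨t₀, ht₀, htop⟩ := hfin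
      have hmid : ∑ t ∈ Icc 1 T, ((1 / θ t : ℝ) : EReal)
          * phiConj Φ (θ t * ‖xstar t - xhat t‖) = ⊤ := by
        refine esum_top _ _ t₀ ht₀ (fun j hj => ?_) ?_
        · exact mul_nonneg
            (by exact_mod_cast (one_div_pos.mpr (hθ' j (mem_Icc.mp hj).1 (mem_Icc.mp hj).2)).le)
            (phiConj_nonneg Φ hΦ0 _)
        · rw [htop]
          exact EReal.coe_mul_top_of_pos
            (one_div_pos.mpr (hθ' t₀ (mem_Icc.mp ht₀).1 (mem_Icc.mp ht₀).2))
      rw [hbregz, hBsum2, hmid, ← EReal.coe_mul,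
        EReal.add_top_of_ne_bot (EReal.coe_ne_bot _), EReal.top_sub_coe]
      exact le_top
    case pos =>
      have hQneg : ∀ t, 1 ≤ t → t ≤ T →
          ((ψ (X (t + 1))).toReal - apsi (X (t + 1))) - ((ψ z).toReal - apsi z)
            + ((∑ i ∈ Ico 1 (t + 1), θ i * xstar i (X (t + 1)))
                - ∑ i ∈ Ico 1 (t + 1), θ i * xstar i z) ≤ 0 := by
        intro t h1 h2
        have := hXlin1 t h1 h2 z hfz
        linarith
      have hstep : ∀ t, 1 ≤ t → t ≤ T →
          xstar t (xt t) - xstar t z ≤ (1 / θ t) *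
            (((phiConj Φ (θ t * ‖xstar t - xhat t‖)).toReal
                - ((ψ (xt t)).toReal + ((xtilpsi t) (xtil t) - (ψ (xtil t)).toReal)
                  - (xtilpsi t) (xt t)))
              + (((ψ (X (t + 1))).toReal - apsi (X (t + 1))) - ((ψ z).toReal - apsi z)
                + ((∑ i ∈ Ico 1 (t + 1), θ i * xstar i (X (t + 1)))
                    - ∑ i ∈ Ico 1 (t + 1), θ i * xstar i z))
              - (((ψ (xtil t)).toReal - apsi (xtil t)) - ((ψ z).toReal - apsi z)
                + ((∑ i ∈ Ico 1 t, θ i * xstar i (xtil t))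
                    - ∑ i ∈ Ico 1 t, θ i * xstar i z))) := by
        intro t h1 h2
        have hθt : 0 < θ t := hθ' t h1 h2
        have hηt1 : η t = 1 := hη1' t h1 (by omega)
        obtain ⟨hΦfin, hsub⟩ := psi_subgrad Φ ψ hbot hΦnn hψ
          (hxt t (mem_Icc.mpr ⟨h1, h2⟩)) ((hXr t h1 h2).1)
        have hPev : ∀ v : E, (xtilpsi t - (η t * θ t) • xhat t) v
            = xtilpsi t v - η t * θ t * xhat t v := by
          intro v
          simp [ContinuousLinearMap.sub_apply, ContinuousLinearMap.smul_apply, smul_eq_mul]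
        rw [hPev, hPev] at hsub
        have hFY := fy Φ hΦ0 hΦnn (norm_nonneg (X (t + 1) - xt t))
          (hfin t (mem_Icc.mpr ⟨h1, h2⟩)) hΦfin
        have hexp : (xstar t - xhat t) (xt t - X (t + 1))
            = xstar t (xt t) - xstar t (X (t + 1))
              - (xhat t (xt t) - xhat t (X (t + 1))) := by
          simp [ContinuousLinearMap.sub_apply, map_sub]; ring
        have hop : xstar t (xt t) - xstar t (X (t + 1))
              - (xhat t (xt t) - xhat t (X (t + 1)))
            ≤ ‖xstar t - xhat t‖ * ‖X (t + 1) - xt t‖ := by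
          rw [← hexp]
          calc (xstar t - xhat t) (xt t - X (t + 1))
              ≤ |(xstar t - xhat t) (xt t - X (t + 1))| := le_abs_self _
            _ = ‖(xstar t - xhat t) (xt t - X (t + 1))‖ := (Real.norm_eq_abs _).symm
            _ ≤ ‖xstar t - xhat t‖ * ‖xt t - X (t + 1)‖ := ContinuousLinearMap.le_opNorm _ _
            _ = ‖xstar t - xhat t‖ * ‖X (t + 1) - xt t‖ := by
                rw [norm_sub_rev (xt t) (X (t + 1))]
        have hopθ := mul_le_mul_of_nonneg_left hop hθt.le
        have hev1 := hxtev t h1 (le_trans h2 (Nat.le_succ T)) (xt t)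
        have hev2 := hxtev t h1 (le_trans h2 (Nat.le_succ T)) (xtil t)
        have hev3 := hxtev t h1 (le_trans h2 (Nat.le_succ T)) (X (t + 1))
        rw [hηt1, one_mul] at hev1 hev2 hev3
        have hσ3X : ∑ i ∈ Ico 1 (t + 1), θ i * xstar i (X (t + 1))
            = (∑ i ∈ Ico 1 t, θ i * xstar i (X (t + 1))) + θ t * xstar t (X (t + 1)) :=
          Finset.sum_Ico_succ_top h1 _
        have hσ3z : ∑ i ∈ Ico 1 (t + 1), θ i * xstar i z
            = (∑ i ∈ Ico 1 t, θ i * xstar i z) + θ t * xstar t z :=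
          Finset.sum_Ico_succ_top h1 _
        rw [hηt1, one_mul] at hsub
        rw [hev1, hev3] at hsub
        rw [hσ3X, hσ3z, hev1, hev2]
        rw [← sub_nonneg, ← mul_le_mul_iff_of_pos_right hθt, zero_mul]
        field_simp
        ring_nf at hsub hFY hopθ ⊢
        linarith [hsub, hFY, hopθ]
      have hRlink : ∀ t, 1 ≤ t → t ≤ T →
          (fun t => if t = 0 then
              -((ψ z).toReal - apsi z - ((ψ a).toReal - apsi a))
            else ((ψ (X (t + 1))).toReal - apsi (X (t + 1))) - ((ψ z).toReal - apsi z)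
              + ((∑ i ∈ Ico 1 (t + 1), θ i * xstar i (X (t + 1)))
                  - ∑ i ∈ Ico 1 (t + 1), θ i * xstar i z)) (t - 1)
          ≤ ((ψ (xtil t)).toReal - apsi (xtil t)) - ((ψ z).toReal - apsi z)
              + ((∑ i ∈ Ico 1 t, θ i * xstar i (xtil t))
                  - ∑ i ∈ Ico 1 t, θ i * xstar i z) := by
        intro t h1 h2
        rcases eq_or_lt_of_le h1 with heq | hlt
        · rw [← heq]
          simp only [Nat.sub_self, eq_self_iff_true, if_true, Finset.Ico_self, Finset.sum_empty, sub_zero]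
          have := hDnn (xtil 1) (hfxtil 1 le_rfl hT)
          linarith
        · obtain ⟨s, rfl⟩ : ∃ s, t = s + 1 := ⟨t - 1, by omega⟩
          have hs1 : 1 ≤ s := by omega
          have hs2 : s ≤ T := by omega
          simp only [Nat.add_sub_cancel, if_neg (by omega : ¬ s = 0)]
          have hXl := hXlin1 s hs1 hs2 (xtil (s + 1)) (hfxtil (s + 1) (by omega) h2)
          linarith
      have tel := telescope T hT (fun t => 1 / θ t)
        (fun t => xstar t (xt t) - xstar t z)
        (fun t => (phiConj Φ (θ t * ‖xstar t - xhat t‖)).toReal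
            - ((ψ (xt t)).toReal + ((xtilpsi t) (xtil t) - (ψ (xtil t)).toReal)
              - (xtilpsi t) (xt t)))
        (fun t => if t = 0 then
            -((ψ z).toReal - apsi z - ((ψ a).toReal - apsi a))
          else ((ψ (X (t + 1))).toReal - apsi (X (t + 1))) - ((ψ z).toReal - apsi z)
            + ((∑ i ∈ Ico 1 (t + 1), θ i * xstar i (X (t + 1)))
                - ∑ i ∈ Ico 1 (t + 1), θ i * xstar i z))
        (fun t => ((ψ (xtil t)).toReal - apsi (xtil t)) - ((ψ z).toReal - apsi z)
            + ((∑ i ∈ Ico 1 t, θ i * xstar i (xtil t))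
                - ∑ i ∈ Ico 1 t, θ i * xstar i z))
        (fun t ht1 ht2 => one_div_pos.mpr (hθ' t ht1 ht2))
        (fun t ht1 ht2 => by
          have := hstep t ht1 ht2
          simpa only [if_neg (by omega : ¬ t = 0)] using this)
        hRlink
        (fun t ht1 ht2 => by
          simp only [if_neg (by omega : ¬ t = 0)]
          have hQt := hQneg t ht1 (by omega)
          have hmono : 1 / θ (t + 1) ≤ 1 / θ t :=
            one_div_le_one_div_of_le (hθ' t ht1 (by omega))
              (hinc t (t + 1) ht1 (Nat.le_succ t) ht2)
          exact mul_le_mul_of_nonpos_left hmono hQt)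
      simp only [if_neg (by omega : ¬ T = 0), eq_self_iff_true, if_true] at tel
      have hwQT : (1 / θ T) * (((ψ (X (T + 1))).toReal - apsi (X (T + 1)))
            - ((ψ z).toReal - apsi z)
            + ((∑ i ∈ Ico 1 (T + 1), θ i * xstar i (X (T + 1)))
                - ∑ i ∈ Ico 1 (T + 1), θ i * xstar i z)) ≤ 0 :=
        mul_nonpos_iff.mpr (Or.inl ⟨(one_div_pos.mpr (hθ' T hT le_rfl)).le,
          hQneg T hT le_rfl⟩)
      have hcsplit : ∑ t ∈ Icc 1 T, (1 / θ t)
            * ((phiConj Φ (θ t * ‖xstar t - xhat t‖)).toReal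
              - ((ψ (xt t)).toReal + ((xtilpsi t) (xtil t) - (ψ (xtil t)).toReal)
                - (xtilpsi t) (xt t)))
          = (∑ t ∈ Icc 1 T, (1 / θ t) * (phiConj Φ (θ t * ‖xstar t - xhat t‖)).toReal)
            - ∑ t ∈ Icc 1 T, (1 / θ t) * ((ψ (xt t)).toReal
              + ((xtilpsi t) (xtil t) - (ψ (xtil t)).toReal) - (xtilpsi t) (xt t)) := by
        rw [← Finset.sum_sub_distrib]
        exact Finset.sum_congr rfl (fun t ht => by ring)
      have hreal : ∑ t ∈ Icc 1 T, ((f t (xt t)).toReal - (f t z).toReal)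
          ≤ (1 / θ 1) * ((ψ z).toReal + (apsi a - (ψ a).toReal) - apsi z)
            + (∑ t ∈ Icc 1 T, (1 / θ t) * (phiConj Φ (θ t * ‖xstar t - xhat t‖)).toReal)
            - ∑ t ∈ Icc 1 T, (1 / θ t) * ((ψ (xt t)).toReal
              + ((xtilpsi t) (xtil t) - (ψ (xtil t)).toReal) - (xtilpsi t) (xt t)) := by
        have s1 : ∑ t ∈ Icc 1 T, ((f t (xt t)).toReal - (f t z).toReal)
            ≤ ∑ t ∈ Icc 1 T, (xstar t (xt t) - xstar t z) :=
          Finset.sum_le_sum (fun t ht => (hfr t (mem_Icc.mp ht).1 (mem_Icc.mp ht).2).2.2.2)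
        rw [hcsplit] at tel
        have hq0 : (1 / θ 1) * -((ψ z).toReal - apsi z - ((ψ a).toReal - apsi a))
            = -((1 / θ 1) * ((ψ z).toReal + (apsi a - (ψ a).toReal) - apsi z)) := by ring
        linarith [tel, hwQT, s1]
      rw [hLHS, hbregz, hBsum2, ← EReal.coe_mul]
      have hmid2 : ∑ t ∈ Icc 1 T, ((1 / θ t : ℝ) : EReal)
            * phiConj Φ (θ t * ‖xstar t - xhat t‖)
          = ((∑ t ∈ Icc 1 T, (1 / θ t)
              * (phiConj Φ (θ t * ‖xstar t - xhat t‖)).toReal : ℝ) : EReal) := by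
        rw [ecoe_sum]
        refine Finset.sum_congr rfl (fun t ht => ?_)
        have hb : phiConj Φ (θ t * ‖xstar t - xhat t‖) ≠ ⊥ :=
          fun hb => by simpa [hb] using phiConj_nonneg Φ hΦ0 (θ t * ‖xstar t - xhat t‖)
        conv_lhs => rw [← EReal.coe_toReal (hfin t ht) hb]
        rw [← EReal.coe_mul]
      rw [hmid2, ← EReal.coe_add, ← EReal.coe_sub]
      exact EReal.coe_le_coe_iff.mpr hreal
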